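/- Let m, n ≥ 1 and let f, g : E^{m,n} → A \ {0} be functions into a (noncommutative) ring A with f(∅|∅) = g(∅|∅) = 1, such that no value of f is a zero divisor in A, both f and g satisfy all Plücker-type relations f(Aj|B)f(Aik|Bℓ) = f(Aij|Bℓ)f(Ak|B) + f(Ajk|Bℓ)f(Ai|B), all co-Plücker-type relations f(A|Bj)f(Aℓ|Bik) = f(Aℓ|Bij)f(A|Bk) + f(Aℓ|Bjk)f(A|Bi), and all Dodgson-type relations f(Ai|Bj)f(Ak|Bℓ) = f(Aik|Bjℓ)f(A|B) + q·f(Ai|Bℓ)f(Ak|Bj) (for the appropriate index configurations), and f and g coincide on all pressed double-interval corteges. Then f = g on all of E^{m,n}. -/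
import Mathlib
open Finset

/-- `(I|J)` is a cortege of `E^{m,n}`: `I ⊆ [m]`, `J ⊆ [n]`, `|I| = |J|`. -/
def Cortege (m n : ℕ) (I J : Finset ℕ) : Prop :=
  I ⊆ Finset.Icc 1 m ∧ J ⊆ Finset.Icc 1 n ∧ I.card = J.card

/-- `(I|J)` is a pressed double-interval cortege: both `I` and `J` are
integer intervals and at least one of them is an initial interval. -/
def PressedInt (I J : Finset ℕ) : Prop :=
  (∃ a b, I = Finset.Icc a b) ∧ (∃ c d, J = Finset.Icc c d) ∧
  (I = Finset.Icc 1 I.card ∨ J = Finset.Icc 1 J.card)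

/-- `h` satisfies all Plücker-type relations with triples (rows version):
for `A ⊂ [m]`, `B ⊂ [n]`, `i < j < k` in `[m] \ A`, `ℓ ∈ [n] \ B`,
`|A| + 1 = |B|`:
`h(Aj|B) h(Aik|Bℓ) = h(Aij|Bℓ) h(Ak|B) + h(Ajk|Bℓ) h(Ai|B)`. -/
def PlueckerRel {R : Type*} [Ring R] (m n : ℕ)
    (h : Finset ℕ → Finset ℕ → R) : Prop :=
  ∀ (A B : Finset ℕ) (i j k l : ℕ),
    A ⊆ Finset.Icc 1 m → B ⊆ Finset.Icc 1 n →
    i ∈ Finset.Icc 1 m → j ∈ Finset.Icc 1 m → k ∈ Finset.Icc 1 m →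
    l ∈ Finset.Icc 1 n →
    i ∉ A → j ∉ A → k ∉ A → l ∉ B → i < j → j < k → A.card + 1 = B.card →
    h (insert j A) B * h (insert i (insert k A)) (insert l B) =
      h (insert i (insert j A)) (insert l B) * h (insert k A) B +
      h (insert j (insert k A)) (insert l B) * h (insert i A) B

/-- `h` satisfies all co-Plücker-type relations (columns version):
for `A ⊂ [m]`, `B ⊂ [n]`, `ℓ ∈ [m] \ A`, `i < j < k` in `[n] \ B`,
`|A| = |B| + 1`:
`h(A|Bj) h(Aℓ|Bik) = h(Aℓ|Bij) h(A|Bk) + h(Aℓ|Bjk) h(A|Bi)`. -/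
def CoPlueckerRel {R : Type*} [Ring R] (m n : ℕ)
    (h : Finset ℕ → Finset ℕ → R) : Prop :=
  ∀ (A B : Finset ℕ) (l i j k : ℕ),
    A ⊆ Finset.Icc 1 m → B ⊆ Finset.Icc 1 n →
    l ∈ Finset.Icc 1 m →
    i ∈ Finset.Icc 1 n → j ∈ Finset.Icc 1 n → k ∈ Finset.Icc 1 n →
    l ∉ A → i ∉ B → j ∉ B → k ∉ B → i < j → j < k → A.card = B.card + 1 →
    h A (insert j B) * h (insert l A) (insert i (insert k B)) =
      h (insert l A) (insert i (insert j B)) * h A (insert k B) +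
      h (insert l A) (insert j (insert k B)) * h A (insert i B)

/-- `h` satisfies all Dodgson-type relations: for `i ≤ k` in `[m]`,
`j ≤ ℓ` in `[n]` with `k - i = ℓ - j`, and `A = [i+1..k-1]`, `B = [j+1..ℓ-1]`:
`h(Ai|Bj) h(Ak|Bℓ) = h(Aik|Bjℓ) h(A|B) + q·h(Ai|Bℓ) h(Ak|Bj)`. -/
def DodgsonRel {R : Type*} [Ring R] (m n : ℕ) (q : R)
    (h : Finset ℕ → Finset ℕ → R) : Prop :=
  ∀ i k j l : ℕ, 1 ≤ i → k ≤ m → 1 ≤ j → l ≤ n → i ≤ k → j ≤ l →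
    k - i = l - j →
    h (insert i (Finset.Icc (i+1) (k-1))) (insert j (Finset.Icc (j+1) (l-1))) *
      h (insert k (Finset.Icc (i+1) (k-1))) (insert l (Finset.Icc (j+1) (l-1))) =
    h (insert i (insert k (Finset.Icc (i+1) (k-1))))
        (insert j (insert l (Finset.Icc (j+1) (l-1)))) *
      h (Finset.Icc (i+1) (k-1)) (Finset.Icc (j+1) (l-1)) +
    q * (h (insert i (Finset.Icc (i+1) (k-1))) (insert l (Finset.Icc (j+1) (l-1))) *
      h (insert k (Finset.Icc (i+1) (k-1))) (insert j (Finset.Icc (j+1) (l-1))))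

lemma cancel_left' {R : Type*} [Ring R] {c a b : R}
    (h : ∀ x : R, c * x = 0 → x = 0) (e : c * a = c * b) : a = b := by
  have := h (a - b) (by rw [mul_sub, e, sub_self])
  exact sub_eq_zero.mp this

/-- width of a finite set of naturals -/
def wdt (I : Finset ℕ) : ℕ := if h : I.Nonempty then I.max' h + 1 - I.min' h else 0

lemma wdt_eq {I : Finset ℕ} (h : I.Nonempty) : wdt I = I.max' h + 1 - I.min' h := dif_pos h

lemma wdt_le_of_subset_Icc {S : Finset ℕ} (hS : S.Nonempty) {a b : ℕ}
    (h : S ⊆ Finset.Icc a b) : wdt S ≤ b + 1 - a := by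
  rw [wdt_eq hS]
  have h1 : a ≤ S.min' hS := Finset.le_min' _ _ _ (fun y hy => (Finset.mem_Icc.mp (h hy)).1)
  have h2 : S.max' hS ≤ b := Finset.max'_le _ _ _ (fun y hy => (Finset.mem_Icc.mp (h hy)).2)
  omega

lemma interval_or_hole (I : Finset ℕ) (hne : I.Nonempty) :
    I = Finset.Icc (I.min' hne) (I.max' hne) ∨
    ∃ j, I.min' hne < j ∧ j < I.max' hne ∧ j ∉ I := by
  by_cases h : Finset.Icc (I.min' hne) (I.max' hne) ⊆ I
  · left
    exact Finset.Subset.antisymm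
      (fun x hx => Finset.mem_Icc.mpr ⟨Finset.min'_le _ _ hx, Finset.le_max' _ _ hx⟩) h
  · right
    obtain ⟨j, hj1, hj2⟩ := Finset.not_subset.mp h
    rw [Finset.mem_Icc] at hj1
    refine ⟨j, ?_, ?_, hj2⟩
    · rcases eq_or_lt_of_le hj1.1 with he | hl
      · exact absurd (he ▸ I.min'_mem hne) hj2
      · exact hl
    · rcases eq_or_lt_of_le hj1.2 with he | hl
      · exact absurd (he ▸ I.max'_mem hne) hj2
      · exact hl

/-- Theorem A: two RQI-functions `f, g` with nonzero values,
with `f(∅|∅) = g(∅|∅) = 1`, such that no value of `f` is a zero divisor,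
both satisfying all Plücker-, co-Plücker- and Dodgson-type relations, and
coinciding on all pressed double-interval corteges, coincide on all of
`E^{m,n}`. -/
theorem stmt9 {R : Type*} [Ring R] (m n : ℕ) (hm : 1 ≤ m) (hn : 1 ≤ n)
    (q : Rˣ) (hq : ∀ x : R, (q : R) * x = x * (q : R))
    (f g : Finset ℕ → Finset ℕ → R)
    (hf1 : f ∅ ∅ = 1) (hg1 : g ∅ ∅ = 1)
    (hfnz : ∀ I J, Cortege m n I J → f I J ≠ 0)
    (hgnz : ∀ I J, Cortege m n I J → g I J ≠ 0)
    (hfreg : ∀ I J, Cortege m n I J →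
      (∀ x : R, f I J * x = 0 → x = 0) ∧ (∀ x : R, x * f I J = 0 → x = 0))
    (hfP : PlueckerRel m n f) (hgP : PlueckerRel m n g)
    (hfC : CoPlueckerRel m n f) (hgC : CoPlueckerRel m n g)
    (hfD : DodgsonRel m n (q : R) f) (hgD : DodgsonRel m n (q : R) g)
    (hpress : ∀ I J, Cortege m n I J → PressedInt I J → f I J = g I J) :
    ∀ I J, Cortege m n I J → f I J = g I J := by
  have cort : ∀ u v w x : ℕ, 1 ≤ u → v ≤ m → 1 ≤ w → x ≤ n → v + 1 - u = x + 1 - w →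
      Cortege m n (Finset.Icc u v) (Finset.Icc w x) := by
    intro u v w x h1 h2 h3 h4 h5
    refine ⟨Finset.Icc_subset_Icc (by omega) (by omega),
      Finset.Icc_subset_Icc (by omega) (by omega), ?_⟩
    simp only [Nat.card_Icc]; omega
  -- Step 1: the double-interval case
  have hint : ∀ N L a b c d : ℕ, a + c ≤ N → b + 1 - a ≤ L → 1 ≤ a → b ≤ m → 1 ≤ c → d ≤ n →
      b + 1 - a = d + 1 - c →
      f (Finset.Icc a b) (Finset.Icc c d) = g (Finset.Icc a b) (Finset.Icc c d) := by
    intro N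
    induction N using Nat.strong_induction_on with
    | _ N ihN =>
    intro L
    induction L using Nat.strong_induction_on with
    | _ L ihL =>
    intro a b c d hN hL ha hb hc hd hlen
    by_cases hab : b < a
    · rw [Finset.Icc_eq_empty (by omega), Finset.Icc_eq_empty (by omega : ¬ c ≤ d), hf1, hg1]
    push_neg at hab
    have hcd : c ≤ d := by omega
    by_cases hpr : a = 1 ∨ c = 1
    · refine hpress _ _ (cort a b c d ha hb hc hd hlen) ⟨⟨a, b, rfl⟩, ⟨c, d, rfl⟩, ?_⟩
      rcases hpr with h1 | h1
      · left; subst h1; rw [Nat.card_Icc]; congr 1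
      · right; subst h1; rw [Nat.card_Icc]; congr 1
    push_neg at hpr
    have ha2 : 2 ≤ a := by omega
    have hc2 : 2 ≤ c := by omega
    have E1r : insert (a-1) (Finset.Icc (a-1+1) (b-1)) = Finset.Icc (a-1) (b-1) := by
      ext x; simp only [Finset.mem_insert, Finset.mem_Icc]; omega
    have E2r : insert b (Finset.Icc (a-1+1) (b-1)) = Finset.Icc a b := by
      ext x; simp only [Finset.mem_insert, Finset.mem_Icc]; omega
    have E3r : insert (a-1) (insert b (Finset.Icc (a-1+1) (b-1))) = Finset.Icc (a-1) b := by
      ext x; simp only [Finset.mem_insert, Finset.mem_Icc]; omega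
    have E4r : Finset.Icc (a-1+1) (b-1) = Finset.Icc a (b-1) := by congr 1; omega
    have E1c : insert (c-1) (Finset.Icc (c-1+1) (d-1)) = Finset.Icc (c-1) (d-1) := by
      ext x; simp only [Finset.mem_insert, Finset.mem_Icc]; omega
    have E2c : insert d (Finset.Icc (c-1+1) (d-1)) = Finset.Icc c d := by
      ext x; simp only [Finset.mem_insert, Finset.mem_Icc]; omega
    have E3c : insert (c-1) (insert d (Finset.Icc (c-1+1) (d-1))) = Finset.Icc (c-1) d := by
      ext x; simp only [Finset.mem_insert, Finset.mem_Icc]; omega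
    have E4c : Finset.Icc (c-1+1) (d-1) = Finset.Icc c (d-1) := by congr 1; omega
    have hDf := hfD (a-1) b (c-1) d (by omega) hb (by omega) hd (by omega) (by omega) (by omega)
    have hDg := hgD (a-1) b (c-1) d (by omega) hb (by omega) hd (by omega) (by omega) (by omega)
    rw [E3r, E3c, E1r, E2r, E1c, E2c, E4r, E4c] at hDf hDg
    have hT0 : f (Finset.Icc (a-1) (b-1)) (Finset.Icc (c-1) (d-1))
        = g (Finset.Icc (a-1) (b-1)) (Finset.Icc (c-1) (d-1)) :=
      ihN (a+c-2) (by omega) (b+1-a) (a-1) (b-1) (c-1) (d-1)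
        (by omega) (by omega) (by omega) (by omega) (by omega) (by omega) (by omega)
    have hT1 : f (Finset.Icc (a-1) b) (Finset.Icc (c-1) d)
        = g (Finset.Icc (a-1) b) (Finset.Icc (c-1) d) :=
      ihN (a+c-2) (by omega) (b+2-a) (a-1) b (c-1) d
        (by omega) (by omega) (by omega) (by omega) (by omega) (by omega) (by omega)
    have hT2 : f (Finset.Icc a (b-1)) (Finset.Icc c (d-1))
        = g (Finset.Icc a (b-1)) (Finset.Icc c (d-1)) :=
      ihL (b-a) (by omega) a (b-1) c (d-1)
        (by omega) (by omega) (by omega) (by omega) (by omega) (by omega) (by omega)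
    have hT3 : f (Finset.Icc (a-1) (b-1)) (Finset.Icc c d)
        = g (Finset.Icc (a-1) (b-1)) (Finset.Icc c d) :=
      ihN (a+c-1) (by omega) (b+1-a) (a-1) (b-1) c d
        (by omega) (by omega) (by omega) (by omega) (by omega) (by omega) (by omega)
    have hT4 : f (Finset.Icc a b) (Finset.Icc (c-1) (d-1))
        = g (Finset.Icc a b) (Finset.Icc (c-1) (d-1)) :=
      ihN (a+c-1) (by omega) (b+1-a) a b (c-1) (d-1)
        (by omega) (by omega) (by omega) (by omega) (by omega) (by omega) (by omega)
    have key : f (Finset.Icc (a-1) (b-1)) (Finset.Icc (c-1) (d-1)) * f (Finset.Icc a b) (Finset.Icc c d)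
        = f (Finset.Icc (a-1) (b-1)) (Finset.Icc (c-1) (d-1)) * g (Finset.Icc a b) (Finset.Icc c d) := by
      rw [hDf, hT1, hT2, hT3, hT4, ← hDg, hT0]
    exact cancel_left'
      (hfreg _ _ (cort (a-1) (b-1) (c-1) (d-1) (by omega) (by omega) (by omega) (by omega)
        (by omega))).1 key
  -- Step 2: the general case, by induction on size, then on total width
  have main : ∀ s K I J, I.card ≤ s → wdt I + wdt J ≤ K → Cortege m n I J → f I J = g I J := by
    intro s
    induction s using Nat.strong_induction_on with
    | _ s ihS =>
    intro K
    induction K using Nat.strong_induction_on with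
    | _ K ihK =>
    intro I J hs hK hC
    obtain ⟨hIm, hJn, hIJ⟩ := hC
    rcases I.eq_empty_or_nonempty with hIe | hIne
    · have hJe : J = ∅ := Finset.card_eq_zero.mp (by rw [← hIJ, hIe, Finset.card_empty])
      rw [hIe, hJe, hf1, hg1]
    have hJne : J.Nonempty := Finset.card_pos.mp (by rw [← hIJ]; exact Finset.card_pos.mpr hIne)
    rcases interval_or_hole I hIne with hIint | ⟨j, hj1, hj2, hjI⟩
    · rcases interval_or_hole J hJne with hJint | ⟨j, hj1, hj2, hjJ⟩
      · -- both intervals : use hint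
        have ha := Finset.mem_Icc.mp (hIm (I.min'_mem hIne))
        have hb := Finset.mem_Icc.mp (hIm (I.max'_mem hIne))
        have hc := Finset.mem_Icc.mp (hJn (J.min'_mem hJne))
        have hd := Finset.mem_Icc.mp (hJn (J.max'_mem hJne))
        have h1 : I.card = I.max' hIne + 1 - I.min' hIne := by
          conv_lhs => rw [hIint]
          rw [Nat.card_Icc]
        have h2 : J.card = J.max' hJne + 1 - J.min' hJne := by
          conv_lhs => rw [hJint]
          rw [Nat.card_Icc]
        have hlen : I.max' hIne + 1 - I.min' hIne = J.max' hJne + 1 - J.min' hJne := by omega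
        rw [hIint, hJint]
        exact hint (I.min' hIne + J.min' hJne) (I.max' hIne + 1 - I.min' hIne) _ _ _ _
          le_rfl le_rfl ha.1 hb.2 hc.1 hd.2 hlen
      · -- J is not an interval : co-Plücker reduction
        set i := J.min' hJne with hidef
        set k := J.max' hJne with hkdef
        have hi : i ∈ J := J.min'_mem hJne
        have hk : k ∈ J := J.max'_mem hJne
        have hik : i < k := lt_trans hj1 hj2
        have hcard2 : 2 ≤ J.card := Finset.one_lt_card.mpr ⟨i, hi, k, hk, by omega⟩
        have hiB := Finset.mem_Icc.mp (hJn hi)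
        have hkB := Finset.mem_Icc.mp (hJn hk)
        set l := I.max' hIne with hldef
        have hl : l ∈ I := I.max'_mem hIne
        set A := I.erase l with hAdef
        set B := (J.erase i).erase k with hBdef
        have hAI : A ⊆ I := Finset.erase_subset _ _
        have hBJ : B ⊆ J := (Finset.erase_subset _ _).trans (Finset.erase_subset _ _)
        have hkB1 : k ∈ J.erase i := Finset.mem_erase.mpr ⟨by omega, hk⟩
        have hAcard : A.card = I.card - 1 := Finset.card_erase_of_mem hl
        have hBcard : B.card = J.card - 2 := by
          rw [hBdef, Finset.card_erase_of_mem hkB1, Finset.card_erase_of_mem hi]; omega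
        have hlA : l ∉ A := Finset.notMem_erase _ _
        have hiBn : i ∉ B := fun h => Finset.notMem_erase i J (Finset.erase_subset _ _ h)
        have hkBn : k ∉ B := Finset.notMem_erase _ _
        have hjBn : j ∉ B := fun h => hjJ (hBJ h)
        have hkBe : insert k B = J.erase i := Finset.insert_erase hkB1
        have hiBe : insert i B = J.erase k := by
          rw [hBdef, Finset.erase_right_comm]
          exact Finset.insert_erase (Finset.mem_erase.mpr ⟨by omega, hi⟩)
        have hJeq : insert i (insert k B) = J := by rw [hkBe]; exact Finset.insert_erase hi
        have hIeq : insert l A = I := Finset.insert_erase hl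
        have hCf := hfC A B l i j k (hAI.trans hIm) (hBJ.trans hJn) (hIm hl)
          (hJn hi) (Finset.mem_Icc.mpr ⟨by omega, by omega⟩) (hJn hk)
          hlA hiBn hjBn hkBn hj1 hj2 (by omega)
        have hCg := hgC A B l i j k (hAI.trans hIm) (hBJ.trans hJn) (hIm hl)
          (hJn hi) (Finset.mem_Icc.mpr ⟨by omega, by omega⟩) (hJn hk)
          hlA hiBn hjBn hkBn hj1 hj2 (by omega)
        rw [hIeq, hJeq, hkBe, hiBe] at hCf hCg
        -- corteges
        have hjm : 1 ≤ j ∧ j ≤ n := ⟨by omega, by omega⟩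
        have cort1 : Cortege m n A (insert j B) :=
          ⟨hAI.trans hIm, Finset.insert_subset (Finset.mem_Icc.mpr ⟨hjm.1, hjm.2⟩) (hBJ.trans hJn),
            by rw [Finset.card_insert_of_notMem hjBn, hAcard, hBcard]; omega⟩
        have cort2 : Cortege m n A (J.erase i) :=
          ⟨hAI.trans hIm, (Finset.erase_subset _ _).trans hJn,
            by rw [hAcard, Finset.card_erase_of_mem hi]; omega⟩
        have cort3 : Cortege m n A (J.erase k) :=
          ⟨hAI.trans hIm, (Finset.erase_subset _ _).trans hJn,
            by rw [hAcard, Finset.card_erase_of_mem hk]; omega⟩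
        have hiQ1 : i ∉ insert j B := by
          simp only [Finset.mem_insert]; push_neg; exact ⟨by omega, hiBn⟩
        have cort4 : Cortege m n I (insert i (insert j B)) :=
          ⟨hIm, Finset.insert_subset (hJn hi)
            (Finset.insert_subset (Finset.mem_Icc.mpr ⟨hjm.1, hjm.2⟩) (hBJ.trans hJn)),
            by rw [Finset.card_insert_of_notMem hiQ1, Finset.card_insert_of_notMem hjBn,
              hBcard]; omega⟩
        have hjQ2 : j ∉ J.erase i := fun h => hjJ (Finset.erase_subset _ _ h)
        have cort5 : Cortege m n I (insert j (J.erase i)) :=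
          ⟨hIm, Finset.insert_subset (Finset.mem_Icc.mpr ⟨hjm.1, hjm.2⟩)
            ((Finset.erase_subset _ _).trans hJn),
            by rw [Finset.card_insert_of_notMem hjQ2, Finset.card_erase_of_mem hi]; omega⟩
        -- width bounds
        have wJ : wdt J = k + 1 - i := wdt_eq hJne
        have wQ1 : wdt (insert i (insert j B)) ≤ k - i := by
          have hsub : insert i (insert j B) ⊆ Finset.Icc i (k-1) := by
            intro x hx
            simp only [Finset.mem_insert] at hx
            rw [Finset.mem_Icc]
            rcases hx with rfl | rfl | hx
            · omega
            · omega
            · have hxJ := hBJ hx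
              have h1 := J.min'_le x hxJ
              have h2 := J.le_max' x hxJ
              have hxk : x ≠ k := (Finset.mem_erase.mp hx).1
              rw [← hidef] at h1; rw [← hkdef] at h2
              omega
          have := wdt_le_of_subset_Icc ⟨i, Finset.mem_insert_self _ _⟩ hsub
          omega
        have wQ2 : wdt (insert j (J.erase i)) ≤ k - i := by
          have hsub : insert j (J.erase i) ⊆ Finset.Icc (i+1) k := by
            intro x hx
            simp only [Finset.mem_insert] at hx
            rw [Finset.mem_Icc]
            rcases hx with rfl | hx
            · omega
            · have hxi : x ≠ i := (Finset.mem_erase.mp hx).1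
              have hxJ := Finset.erase_subset _ _ hx
              have h1 := J.min'_le x hxJ
              have h2 := J.le_max' x hxJ
              rw [← hidef] at h1; rw [← hkdef] at h2
              omega
          have := wdt_le_of_subset_Icc ⟨j, Finset.mem_insert_self _ _⟩ hsub
          omega
        -- induction hypotheses
        have hsm1 : I.card - 1 < s := by omega
        have q1 : f A (insert j B) = g A (insert j B) :=
          ihS (I.card - 1) hsm1 (wdt A + wdt (insert j B)) _ _ (by omega) le_rfl cort1
        have q2 : f A (J.erase i) = g A (J.erase i) :=
          ihS (I.card - 1) hsm1 (wdt A + wdt (J.erase i)) _ _ (by omega) le_rfl cort2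
        have q3 : f A (J.erase k) = g A (J.erase k) :=
          ihS (I.card - 1) hsm1 (wdt A + wdt (J.erase k)) _ _ (by omega) le_rfl cort3
        have q4 : f I (insert i (insert j B)) = g I (insert i (insert j B)) :=
          ihK (wdt I + wdt (insert i (insert j B))) (by omega) _ _ hs le_rfl cort4
        have q5 : f I (insert j (J.erase i)) = g I (insert j (J.erase i)) :=
          ihK (wdt I + wdt (insert j (J.erase i))) (by omega) _ _ hs le_rfl cort5
        have key : f A (insert j B) * f I J = f A (insert j B) * g I J := by
          rw [hCf, q2, q3, q4, q5, ← hCg, q1]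
        exact cancel_left' (hfreg _ _ cort1).1 key
    · -- I is not an interval : Plücker reduction
      set i := I.min' hIne with hidef
      set k := I.max' hIne with hkdef
      have hi : i ∈ I := I.min'_mem hIne
      have hk : k ∈ I := I.max'_mem hIne
      have hik : i < k := lt_trans hj1 hj2
      have hcard2 : 2 ≤ I.card := Finset.one_lt_card.mpr ⟨i, hi, k, hk, by omega⟩
      have hiB := Finset.mem_Icc.mp (hIm hi)
      have hkB := Finset.mem_Icc.mp (hIm hk)
      set l := J.max' hJne with hldef
      have hl : l ∈ J := J.max'_mem hJne
      set A := (I.erase i).erase k with hAdef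
      set B := J.erase l with hBdef
      have hAI : A ⊆ I := (Finset.erase_subset _ _).trans (Finset.erase_subset _ _)
      have hBJ : B ⊆ J := Finset.erase_subset _ _
      have hkA1 : k ∈ I.erase i := Finset.mem_erase.mpr ⟨by omega, hk⟩
      have hAcard : A.card = I.card - 2 := by
        rw [hAdef, Finset.card_erase_of_mem hkA1, Finset.card_erase_of_mem hi]; omega
      have hBcard : B.card = J.card - 1 := Finset.card_erase_of_mem hl
      have hiAn : i ∉ A := fun h => Finset.notMem_erase i I (Finset.erase_subset _ _ h)
      have hkAn : k ∉ A := Finset.notMem_erase _ _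
      have hjAn : j ∉ A := fun h => hjI (hAI h)
      have hlBn : l ∉ B := Finset.notMem_erase _ _
      have hkAe : insert k A = I.erase i := Finset.insert_erase hkA1
      have hiAe : insert i A = I.erase k := by
        rw [hAdef, Finset.erase_right_comm]
        exact Finset.insert_erase (Finset.mem_erase.mpr ⟨by omega, hi⟩)
      have hIeq : insert i (insert k A) = I := by rw [hkAe]; exact Finset.insert_erase hi
      have hJeq : insert l B = J := Finset.insert_erase hl
      have hPf := hfP A B i j k l (hAI.trans hIm) (hBJ.trans hJn) (hIm hi)
        (Finset.mem_Icc.mpr ⟨by omega, by omega⟩) (hIm hk) (hJn hl)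
        hiAn hjAn hkAn hlBn hj1 hj2 (by omega)
      have hPg := hgP A B i j k l (hAI.trans hIm) (hBJ.trans hJn) (hIm hi)
        (Finset.mem_Icc.mpr ⟨by omega, by omega⟩) (hIm hk) (hJn hl)
        hiAn hjAn hkAn hlBn hj1 hj2 (by omega)
      rw [hIeq, hJeq, hkAe, hiAe] at hPf hPg
      have hjm : 1 ≤ j ∧ j ≤ m := ⟨by omega, by omega⟩
      have cort1 : Cortege m n (insert j A) B :=
        ⟨Finset.insert_subset (Finset.mem_Icc.mpr ⟨hjm.1, hjm.2⟩) (hAI.trans hIm),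
          hBJ.trans hJn,
          by rw [Finset.card_insert_of_notMem hjAn, hAcard, hBcard]; omega⟩
      have cort2 : Cortege m n (I.erase i) B :=
        ⟨(Finset.erase_subset _ _).trans hIm, hBJ.trans hJn,
          by rw [Finset.card_erase_of_mem hi, hBcard]; omega⟩
      have cort3 : Cortege m n (I.erase k) B :=
        ⟨(Finset.erase_subset _ _).trans hIm, hBJ.trans hJn,
          by rw [Finset.card_erase_of_mem hk, hBcard]; omega⟩
      have hiP1 : i ∉ insert j A := by
        simp only [Finset.mem_insert]; push_neg; exact ⟨by omega, hiAn⟩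
      have cort4 : Cortege m n (insert i (insert j A)) J :=
        ⟨Finset.insert_subset (hIm hi)
          (Finset.insert_subset (Finset.mem_Icc.mpr ⟨hjm.1, hjm.2⟩) (hAI.trans hIm)),
          hJn,
          by rw [Finset.card_insert_of_notMem hiP1, Finset.card_insert_of_notMem hjAn,
            hAcard]; omega⟩
      have hjP2 : j ∉ I.erase i := fun h => hjI (Finset.erase_subset _ _ h)
      have cort5 : Cortege m n (insert j (I.erase i)) J :=
        ⟨Finset.insert_subset (Finset.mem_Icc.mpr ⟨hjm.1, hjm.2⟩)
          ((Finset.erase_subset _ _).trans hIm),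
          hJn,
          by rw [Finset.card_insert_of_notMem hjP2, Finset.card_erase_of_mem hi]; omega⟩
      have wI : wdt I = k + 1 - i := wdt_eq hIne
      have wP1 : wdt (insert i (insert j A)) ≤ k - i := by
        have hsub : insert i (insert j A) ⊆ Finset.Icc i (k-1) := by
          intro x hx
          simp only [Finset.mem_insert] at hx
          rw [Finset.mem_Icc]
          rcases hx with rfl | rfl | hx
          · omega
          · omega
          · have hxI := hAI hx
            have h1 := I.min'_le x hxI
            have h2 := I.le_max' x hxI
            have hxk : x ≠ k := (Finset.mem_erase.mp hx).1
            rw [← hidef] at h1; rw [← hkdef] at h2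
            omega
        have := wdt_le_of_subset_Icc ⟨i, Finset.mem_insert_self _ _⟩ hsub
        omega
      have wP2 : wdt (insert j (I.erase i)) ≤ k - i := by
        have hsub : insert j (I.erase i) ⊆ Finset.Icc (i+1) k := by
          intro x hx
          simp only [Finset.mem_insert] at hx
          rw [Finset.mem_Icc]
          rcases hx with rfl | hx
          · omega
          · have hxi : x ≠ i := (Finset.mem_erase.mp hx).1
            have hxI := Finset.erase_subset _ _ hx
            have h1 := I.min'_le x hxI
            have h2 := I.le_max' x hxI
            rw [← hidef] at h1; rw [← hkdef] at h2
            omega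
        have := wdt_le_of_subset_Icc ⟨j, Finset.mem_insert_self _ _⟩ hsub
        omega
      have hsm1 : I.card - 1 < s := by omega
      have q1 : f (insert j A) B = g (insert j A) B :=
        ihS (I.card - 1) hsm1 (wdt (insert j A) + wdt B) _ _
          (by rw [Finset.card_insert_of_notMem hjAn, hAcard]; omega) le_rfl cort1
      have q2 : f (I.erase i) B = g (I.erase i) B :=
        ihS (I.card - 1) hsm1 (wdt (I.erase i) + wdt B) _ _
          (by rw [Finset.card_erase_of_mem hi]) le_rfl cort2
      have q3 : f (I.erase k) B = g (I.erase k) B :=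
        ihS (I.card - 1) hsm1 (wdt (I.erase k) + wdt B) _ _
          (by rw [Finset.card_erase_of_mem hk]) le_rfl cort3
      have q4 : f (insert i (insert j A)) J = g (insert i (insert j A)) J :=
        ihK (wdt (insert i (insert j A)) + wdt J) (by omega) _ _
          (by rw [Finset.card_insert_of_notMem hiP1, Finset.card_insert_of_notMem hjAn,
            hAcard]; omega) le_rfl cort4
      have q5 : f (insert j (I.erase i)) J = g (insert j (I.erase i)) J :=
        ihK (wdt (insert j (I.erase i)) + wdt J) (by omega) _ _
          (by rw [Finset.card_insert_of_notMem hjP2, Finset.card_erase_of_mem hi]; omega)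
          le_rfl cort5
      have key : f (insert j A) B * f I J = f (insert j A) B * g I J := by
        rw [hPf, q2, q3, q4, q5, ← hPg, q1]
      exact cancel_left' (hfreg _ _ cort1).1 key
  intro I J hC
  exact main I.card (wdt I + wdt J) I J le_rfl le_rfl hC
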